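/- Over {a<b<c}, let w be any word such that the projection of w onto {a,c} contains a c^n a as a factor for some n ≥ 2. Then w is M-equivalent to a word containing ac or ca as a (contiguous) factor. -/
import Mathlib


open List

/-- Number of occurrences of `v` as a scattered subsequence of `w`. -/
def scount {α : Type*} [DecidableEq α] (w v : List α) : ℕ := w.sublists.count v

/-- The ternary ordered alphabet {a < b < c}. -/
inductive ABC | a | b | c
deriving DecidableEq

open ABC

/-- M-equivalence over the ordered alphabet {a < b < c}. -/
def MEq3 (w w' : List ABC) : Prop :=
  scount w [a] = scount w' [a] ∧ scount w [b] = scount w' [b] ∧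
  scount w [c] = scount w' [c] ∧ scount w [a, b] = scount w' [a, b] ∧
  scount w [b, c] = scount w' [b, c] ∧ scount w [a, b, c] = scount w' [a, b, c]

/-- Projection onto {a, c}: erase all b's. -/
def projAC (w : List ABC) : List ABC := w.filter (· ≠ b)

abbrev A (k : ℕ) : List ABC := List.replicate k a
abbrev B (k : ℕ) : List ABC := List.replicate k b
abbrev C (k : ℕ) : List ABC := List.replicate k c

section ScountLemmas

variable {α : Type*} [DecidableEq α]

lemma count_lawful {β : Type*} (inst1 inst2 : BEq β) [@LawfulBEq β inst1] [@LawfulBEq β inst2]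
    (v : β) (l : List β) : @List.count β inst1 v l = @List.count β inst2 v l := by
  induction l with
  | nil => rfl
  | cons x t ih =>
    rw [@count_cons _ inst1, @count_cons _ inst2, ih]
    by_cases h : x = v
    · simp [h]
    · simp [h]

lemma scount_eq_sublists' (w v : List α) : scount w v = count v w.sublists' := by
  unfold scount
  exact (count_lawful _ _ _ _).trans
    (((w.sublists_perm_sublists').count_eq v).trans (count_lawful _ _ _ _))

lemma count_nil_sublists' (l : List α) : l.sublists'.count ([] : List α) = 1 := by
  induction l with
  | nil => simp [sublists'_nil]
  | cons x t ih =>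
    rw [sublists'_cons, count_append, ih]
    have : ([] : List α) ∉ (t.sublists'.map (cons x)) := by
      simp
    rw [count_eq_zero.mpr this]

lemma scount_nil_pat (l : List α) : scount l [] = 1 := by
  rw [scount_eq_sublists', count_nil_sublists']

lemma scount_nil (v : List α) : scount [] v = if v = [] then 1 else 0 := by
  rw [scount_eq_sublists']
  simp [sublists'_nil, count_singleton']
  split <;> simp_all

lemma scount_cons (x : α) (l : List α) (y : α) (v : List α) :
    scount (x :: l) (y :: v) = scount l (y :: v) + if x = y then scount l v else 0 := by
  simp only [scount_eq_sublists', sublists'_cons, count_append]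
  have key : count (y :: v) (l.sublists'.map (cons x)) = if x = y then count v l.sublists' else 0 := by
    by_cases h : x = y
    · rw [if_pos h]
      subst h
      have h2 := count_map_of_injective (l.sublists') (cons x) cons_injective v
      exact ((count_lawful _ _ _ _).trans h2).trans (count_lawful _ _ _ _)
    · rw [if_neg h, count_eq_zero]
      simp only [mem_map, not_exists, not_and]
      intro s _ hs
      first
      | exact h (head_eq_of_cons_eq hs)
      | exact h (head_eq_of_cons_eq hs.symm)
  rw [key]

lemma scount_one (l : List α) (p : α) : scount l [p] = l.count p := by
  induction l with
  | nil => simp [scount_nil]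
  | cons x t ih =>
    rw [scount_cons, ih, count_cons, scount_nil_pat]
    by_cases h : x = p <;> simp [h, beq_iff_eq]

lemma scount_append2 (l₁ l₂ : List α) (p q : α) :
    scount (l₁ ++ l₂) [p, q] =
      scount l₁ [p, q] + scount l₂ [p, q] + l₁.count p * l₂.count q := by
  induction l₁ with
  | nil => simp [scount_nil]
  | cons x t ih =>
    simp only [cons_append, scount_cons, ih, count_cons, scount_one, count_append]
    by_cases h : x = p <;> simp [h, beq_iff_eq] <;> ring

lemma scount_append3 (l₁ l₂ : List α) (p q r : α) :
    scount (l₁ ++ l₂) [p, q, r] =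
      scount l₁ [p, q, r] + scount l₂ [p, q, r] +
        scount l₁ [p, q] * l₂.count r + l₁.count p * scount l₂ [q, r] := by
  induction l₁ with
  | nil => simp [scount_nil]
  | cons x t ih =>
    simp only [cons_append, scount_cons, ih, count_cons, scount_append2, scount_one, count_append]
    by_cases h : x = p <;> simp [h, beq_iff_eq] <;> ring

lemma scount_pair_le (l : List α) (p q : α) :
    scount l [p, q] ≤ l.count p * l.count q := by
  induction l with
  | nil => simp [scount_nil]
  | cons x t ih =>
    rw [scount_cons, count_cons, count_cons, scount_one]
    simp only [beq_iff_eq]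
    split_ifs <;> nlinarith [ih]

lemma scount_pair_left_zero (l : List α) (p q : α) (h : l.count p = 0) :
    scount l [p, q] = 0 :=
  Nat.le_zero.mp <| (scount_pair_le l p q).trans (by rw [h]; simp)

lemma scount_pair_right_zero (l : List α) (p q : α) (h : l.count q = 0) :
    scount l [p, q] = 0 :=
  Nat.le_zero.mp <| (scount_pair_le l p q).trans (by rw [h]; simp)

lemma scount_triple_left_zero (l : List α) (p q r : α) (h : l.count p = 0) :
    scount l [p, q, r] = 0 := by
  induction l with
  | nil => simp [scount_nil]
  | cons x t ih =>
    rw [count_cons] at h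
    have hx : ¬ (x = p) := by
      intro hxp; simp [hxp] at h
    have ht : t.count p = 0 := by
      simp [hx] at h; omega
    rw [scount_cons, ih ht, if_neg hx]

end ScountLemmas

section FilterSplit

variable {α : Type*}

lemma filter_split (p : α → Bool) :
    ∀ (l L₁ L₂ : List α), l.filter p = L₁ ++ L₂ →
      ∃ l₁ l₂, l = l₁ ++ l₂ ∧ l₁.filter p = L₁ ∧ l₂.filter p = L₂ := by
  intro l
  induction l with
  | nil =>
    intro L₁ L₂ h
    simp only [filter_nil] at h
    obtain ⟨rfl, rfl⟩ := List.append_eq_nil_iff.mp h.symm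
    exact ⟨[], [], by simp, by simp, by simp⟩
  | cons x t ih =>
    intro L₁ L₂ h
    by_cases hx : p x
    · rw [filter_cons_of_pos hx] at h
      cases L₁ with
      | nil =>
        simp only [nil_append] at h ⊢
        exact ⟨[], x :: t, by simp, by simp, by rw [filter_cons_of_pos hx, h]⟩
      | cons y L₁' =>
        simp only [cons_append] at h
        have hxy := head_eq_of_cons_eq h
        have h' := tail_eq_of_cons_eq h
        obtain ⟨l₁, l₂, rfl, h1, h2⟩ := ih L₁' L₂ h'
        exact ⟨x :: l₁, l₂, by simp, by rw [filter_cons_of_pos hx, h1, hxy], h2⟩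
    · rw [filter_cons_of_neg (by simpa using hx)] at h
      obtain ⟨l₁, l₂, rfl, h1, h2⟩ := ih L₁ L₂ h
      exact ⟨x :: l₁, l₂, by simp, by rw [filter_cons_of_neg (by simpa using hx), h1], h2⟩

lemma filter_split_cons (p : α → Bool) :
    ∀ (l : List α) (x : α) (L : List α), l.filter p = x :: L →
      ∃ l₁ l₂, l = l₁ ++ x :: l₂ ∧ l₁.filter p = [] ∧ l₂.filter p = L := by
  intro l
  induction l with
  | nil => intro x L h; simp at h
  | cons y t ih =>
    intro x L h
    by_cases hy : p y
    · rw [filter_cons_of_pos hy] at h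
      exact ⟨[], t, by simp [head_eq_of_cons_eq h], by simp, tail_eq_of_cons_eq h⟩
    · rw [filter_cons_of_neg (by simpa using hy)] at h
      obtain ⟨l₁, l₂, rfl, h1, h2⟩ := ih x L h
      exact ⟨y :: l₁, l₂, by simp,
        by rw [filter_cons_of_neg (by simpa using hy), h1], h2⟩

end FilterSplit

section Patterns

variable {α : Type*} [DecidableEq α]

lemma scount_pair_singleton (z p q : α) : scount [z] [p, q] = 0 := by
  rw [show ([z] : List α) = z :: [] from rfl, scount_cons]
  simp [scount_nil]

lemma scount_triple_singleton (z p q r : α) : scount [z] [p, q, r] = 0 := by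
  rw [show ([z] : List α) = z :: [] from rfl, scount_cons]
  simp [scount_nil]

end Patterns

lemma MEq3_mid (u v m m' : List ABC)
    (ha : m.count a = m'.count a) (hb : m.count b = m'.count b)
    (hc : m.count c = m'.count c)
    (hab : scount m [a, b] = scount m' [a, b])
    (hbc : scount m [b, c] = scount m' [b, c])
    (habc : scount m [a, b, c] = scount m' [a, b, c]) :
    MEq3 (u ++ [a] ++ m ++ [a] ++ v) (u ++ [a] ++ m' ++ [a] ++ v) := by
  refine ⟨?_, ?_, ?_, ?_, ?_, ?_⟩ <;>
    simp [scount_append3, scount_append2, scount_one, count_append, scount_cons,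
      scount_nil, scount_pair_singleton, scount_triple_singleton,
      ha, hb, hc, hab, hbc, habc] <;>
    ring

lemma rep_last {α : Type*} (k : ℕ) (z : α) (h : 1 ≤ k) :
    List.replicate k z = List.replicate (k - 1) z ++ [z] := by
  obtain ⟨j, rfl⟩ : ∃ j, k = j + 1 := ⟨k - 1, by omega⟩
  simp [List.replicate_succ']

lemma rep_head {α : Type*} (k : ℕ) (z : α) (h : 1 ≤ k) :
    List.replicate k z = z :: List.replicate (k - 1) z := by
  obtain ⟨j, rfl⟩ : ∃ j, k = j + 1 := ⟨k - 1, by omega⟩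
  simp [List.replicate_succ]

theorem stmt_9 (w : List ABC) (n : ℕ) (hn : 2 ≤ n)
    (hfac : ([a] ++ C n ++ [a]) <:+: projAC w) :
    ∃ w' : List ABC, MEq3 w w' ∧ ([a, c] <:+: w' ∨ [c, a] <:+: w') := by
  obtain ⟨s, t, hw⟩ := hfac
  unfold projAC at hw
  -- normalize the shape of the filtered word
  have hw' : w.filter (· ≠ b) = s ++ (a :: (C n ++ (a :: t))) := by
    rw [hw.symm]; simp
  obtain ⟨w1, w2, rfl, hf1, hf2⟩ := filter_split (· ≠ b) w s (a :: (C n ++ (a :: t))) hw'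
  obtain ⟨u2, w3, rfl, hfu2, hf3⟩ := filter_split_cons (· ≠ b) w2 a (C n ++ (a :: t)) hf2
  obtain ⟨m0, w4, rfl, hfm0, hf4⟩ := filter_split (· ≠ b) w3 (C n) (a :: t) hf3
  obtain ⟨u4, v, rfl, hfu4, hfv⟩ := filter_split_cons (· ≠ b) w4 a t hf4
  set u : List ABC := w1 ++ u2 with hu
  set m : List ABC := m0 ++ u4 with hm
  have hwshape : w1 ++ (u2 ++ a :: (m0 ++ (u4 ++ a :: v))) = u ++ [a] ++ m ++ [a] ++ v := by
    simp [hu, hm]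
  have hfm : m.filter (· ≠ b) = C n := by
    rw [hm, filter_append, hfm0, hfu4, append_nil]
  -- counts of m
  have hma : m.count a = 0 := by
    have := count_filter (l := m) (p := (· ≠ b)) (a := a) (by decide)
    rw [hfm] at this
    rw [← this, count_replicate]
    simp
  have hmc : m.count c = n := by
    have := count_filter (l := m) (p := (· ≠ b)) (a := c) (by decide)
    rw [hfm] at this
    rw [← this, count_replicate_self]
  set S : ℕ := m.count b with hS
  set T : ℕ := scount m [b, c] with hT
  have hTle : T ≤ S * n := by
    have := scount_pair_le m b c
    rw [← hS, hmc] at this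
    exact this
  -- choose the redistribution parameters
  set d : ℕ := min (T / S) (n - 1) with hd
  set x : ℕ := T - S * d with hx
  have hSdT : S * d ≤ T := by
    calc S * d ≤ S * (T / S) := Nat.mul_le_mul_left S (min_le_left _ _)
    _ = (T / S) * S := Nat.mul_comm _ _
    _ ≤ T := Nat.div_mul_le_self T S
  have hxS : x ≤ S := by
    rcases Nat.eq_zero_or_pos S with hS0 | hS0
    · have h0 : S * n = 0 := by rw [hS0, Nat.zero_mul]
      have : T = 0 := by omega
      simp [hx, this]
    · by_cases hcase : T / S ≤ n - 1
      · have hdv : d = T / S := by rw [hd, min_eq_left hcase]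
        have h1 : S * d = S * (T / S) := by rw [hdv]
        have h2 := Nat.div_add_mod T S
        have hmod := Nat.mod_lt T hS0
        omega
      · have hdv : d = n - 1 := by rw [hd]; omega
        have h1 : S * d = S * (n - 1) := by rw [hdv]
        have h2 : S * n = S * (n - 1) + S := by
          have hn' : n = (n - 1) + 1 := by omega
          calc S * n = S * ((n - 1) + 1) := by rw [← hn']
          _ = S * (n - 1) + S := Nat.mul_succ _ _
        omega
  set y : ℕ := S - x with hy
  have hxy : x + y = S := by omega
  set m' : List ABC := C (n - 1 - d) ++ (B x ++ ([c] ++ (B y ++ C d))) with hm'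
  -- stats of m'
  have hm'a : m'.count a = 0 := by
    simp [hm', count_append, count_replicate]
  have hm'b : m'.count b = S := by
    simp [hm', count_append, count_replicate, count_replicate_self]
    omega
  have hm'c : m'.count c = n := by
    simp [hm', count_append, count_replicate, count_replicate_self]
    have hdn : d ≤ n - 1 := min_le_right _ _
    omega
  have hrep_bc : ∀ (k : ℕ) (z : ABC), scount (List.replicate k z) [b, c] = 0 := by
    intro k z
    cases z
    · exact scount_pair_left_zero _ _ _ (by rw [count_replicate]; simp)
    · exact scount_pair_right_zero _ _ _ (by rw [count_replicate]; simp)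
    · exact scount_pair_left_zero _ _ _ (by rw [count_replicate]; simp)
  have hm'bc : scount m' [b, c] = T := by
    rw [hm']
    rw [scount_append2, scount_append2, scount_append2, scount_append2]
    simp [hrep_bc, scount_pair_singleton, count_append, count_replicate,
      count_replicate_self]
    have h1 : x * d + y * d = S * d := by
      rw [← Nat.add_mul, hxy]
    have h2 : x * (d + 1) = x * d + x := by ring
    omega
  -- the M-equivalence
  have hmeq : MEq3 (u ++ [a] ++ m ++ [a] ++ v) (u ++ [a] ++ m' ++ [a] ++ v) := by
    apply MEq3_mid
    · rw [hma, hm'a]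
    · rw [← hS, hm'b]
    · rw [hmc, hm'c]
    · rw [scount_pair_left_zero m a b hma, scount_pair_left_zero m' a b hm'a]
    · rw [← hT, hm'bc]
    · rw [scount_triple_left_zero m a b c hma, scount_triple_left_zero m' a b c hm'a]
  refine ⟨u ++ [a] ++ m' ++ [a] ++ v, by rw [← hwshape] at hmeq; exact hmeq, ?_⟩
  -- exhibit the factor
  rcases Nat.eq_zero_or_pos (n - 1 - d) with hp | hp
  · -- d = n - 1 ≥ 1, so m' ends with c : get [c, a]
    right
    have hd1 : 1 ≤ d := by
      have := min_le_right (T / S) (n - 1)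
      omega
    have hCd : C d = C (d - 1) ++ [c] := rep_last d c hd1
    refine ⟨u ++ [a] ++ (C (n - 1 - d) ++ (B x ++ ([c] ++ (B y ++ C (d - 1))))), v, ?_⟩
    rw [hm', hCd]
    simp
  · left
    have hCp : C (n - 1 - d) = c :: C (n - 1 - d - 1) := rep_head (n - 1 - d) c hp
    refine ⟨u, C (n - 1 - d - 1) ++ (B x ++ ([c] ++ (B y ++ C d))) ++ [a] ++ v, ?_⟩
    rw [hm', hCp]
    simp
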